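/- Let N ≥ 3 be a natural number and let r ∈ (0, 1) satisfy r³ − 3μr² + 3r − μ = 0 where μ = (N−1)/(N+1). Define ε₀ = 6r/(N−1), ε₁ = 0, ε₂ = 2r³/(N−1), θ₀ = 8r²/(r² + 3), θ₁ = −3r², θ₂ = 3r² − 8r²/(r² + 3). Then for each λ ∈ {1, N}, every complex root of the cubic z³ + (ε₀λ − 1 − θ₀)z² + (ε₁λ + θ₀ + θ₂)z + (ε₂λ − θ₂) has modulus at most r. -/

import Mathlib

/-- achievability of the two-tap rate on star networks: with the
parameters of Theorem 3(i), for each λ ∈ {1, N} every complex root of the cubic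
z³ + (ε₀λ − 1 − θ₀)z² + (ε₁λ + θ₀ + θ₂)z + (ε₂λ − θ₂) has modulus at most r. -/
theorem stmt_16 (N : ℕ) (hN : 3 ≤ N) (r : ℝ) (hr0 : 0 < r) (hr1 : r < 1)
    (hroot : r ^ 3 - 3 * (((N : ℝ) - 1) / ((N : ℝ) + 1)) * r ^ 2 + 3 * r
        - ((N : ℝ) - 1) / ((N : ℝ) + 1) = 0)
    (ε₀ ε₁ ε₂ θ₀ θ₁ θ₂ : ℝ)
    (hε₀ : ε₀ = 6 * r / ((N : ℝ) - 1)) (hε₁ : ε₁ = 0)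
    (hε₂ : ε₂ = 2 * r ^ 3 / ((N : ℝ) - 1))
    (hθ₀ : θ₀ = 8 * r ^ 2 / (r ^ 2 + 3)) (hθ₁ : θ₁ = -3 * r ^ 2)
    (hθ₂ : θ₂ = 3 * r ^ 2 - 8 * r ^ 2 / (r ^ 2 + 3)) :
    ∀ lam : ℝ, lam = 1 ∨ lam = (N : ℝ) →
      ∀ z : ℂ,
        z ^ 3 + ((ε₀ * lam - 1 - θ₀ : ℝ) : ℂ) * z ^ 2 +
            ((ε₁ * lam + θ₀ + θ₂ : ℝ) : ℂ) * z + ((ε₂ * lam - θ₂ : ℝ) : ℂ) = 0 →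
        ‖z‖ ≤ r := by
  intro lam hlam z hz
  have hN3 : (3 : ℝ) ≤ (N : ℝ) := by exact_mod_cast hN
  have hN1 : ((N : ℝ) - 1) ≠ 0 := by linarith
  have hN1' : ((N : ℝ) + 1) ≠ 0 := by linarith
  have hden : (r ^ 2 + 3 : ℝ) ≠ 0 := by nlinarith
  have key : ((N : ℝ) - 1) * (1 - r) ^ 3 = 2 * r * (r ^ 2 + 3) := by
    field_simp at hroot
    linarith [hroot]
  rcases hlam with h1 | h1
  · -- λ = 1 : polynomial is (z - r)^3
    have ha : ε₀ * lam - 1 - θ₀ = -(3 * r) := by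
      subst h1; rw [hε₀, hθ₀]; field_simp; linear_combination (-3 : ℝ) * key
    have hb : ε₁ * lam + θ₀ + θ₂ = 3 * r ^ 2 := by
      subst h1; rw [hε₁, hθ₀, hθ₂]; ring
    have hc : ε₂ * lam - θ₂ = -(r ^ 3) := by
      subst h1; rw [hε₂, hθ₂]; field_simp; linear_combination (-1 : ℝ) * key
    rw [ha, hb, hc] at hz
    push_cast at hz
    have h3 : (z - (r : ℂ)) ^ 3 = 0 := by linear_combination hz
    have hzr : z = (r : ℂ) :=
      sub_eq_zero.mp ((pow_eq_zero_iff (n := 3) (by norm_num)).mp h3)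
    rw [hzr, Complex.norm_real, Real.norm_eq_abs, abs_of_pos hr0]
  · -- λ = N : polynomial is (z + r)^3
    have ha : ε₀ * lam - 1 - θ₀ = 3 * r := by
      subst h1; rw [hε₀, hθ₀]; field_simp; linear_combination (-3 : ℝ) * key
    have hb : ε₁ * lam + θ₀ + θ₂ = 3 * r ^ 2 := by
      subst h1; rw [hε₁, hθ₀, hθ₂]; ring
    have hc : ε₂ * lam - θ₂ = r ^ 3 := by
      subst h1; rw [hε₂, hθ₂]; field_simp; linear_combination (-1 : ℝ) * key
    rw [ha, hb, hc] at hz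
    push_cast at hz
    have h3 : (z + (r : ℂ)) ^ 3 = 0 := by linear_combination hz
    have hzr : z = -(r : ℂ) :=
      eq_neg_of_add_eq_zero_left ((pow_eq_zero_iff (n := 3) (by norm_num)).mp h3)
    rw [hzr, norm_neg, Complex.norm_real, Real.norm_eq_abs, abs_of_pos hr0]
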